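/- For r ∈ ℂ and g = [[a,b],[c,d]] ∈ SL₂(ℝ), the kernel K_r(z;τ) = (2i/(z-τ))((z̄-τ)/(z̄-z))^{r-1} satisfies the invariance (cz+d)^{-r}(cτ+d)^{r-2} K_r(gz; gτ) = K_r(z;τ) for all z, τ ∈ ℍ with z ≠ τ. -/

import Mathlib

open Complex

noncomputable def mdenom (g : Matrix.SpecialLinearGroup (Fin 2) ℝ) (z : ℂ) : ℂ :=
  (g.1 1 0 : ℂ) * z + (g.1 1 1 : ℂ)

noncomputable def mact (g : Matrix.SpecialLinearGroup (Fin 2) ℝ) (z : ℂ) : ℂ :=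
  ((g.1 0 0 : ℂ) * z + (g.1 0 1 : ℂ)) / mdenom g z

/-- The kernel `K_r(z;τ) = (2i/(z-τ)) ((z̄-τ)/(z̄-z))^(r-1)` (principal branch). -/
noncomputable def Kker (r : ℂ) (z τ : ℂ) : ℂ :=
  2 * Complex.I / (z - τ) *
    (((starRingEnd ℂ z - τ) / (starRingEnd ℂ z - z)) ^ (r - 1))

private lemma cpow_mul_of_arg {x y : ℂ} (hx : x ≠ 0) (hy : y ≠ 0)
    (h : arg x + arg y ∈ Set.Ioc (-Real.pi) Real.pi) (s : ℂ) :
    (x * y) ^ s = x ^ s * y ^ s := by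
  rw [cpow_def_of_ne_zero (mul_ne_zero hx hy), cpow_def_of_ne_zero hx, cpow_def_of_ne_zero hy,
    Complex.log_mul hx hy h, add_mul, Complex.exp_add]

private lemma arg_add_mem {x y : ℂ} (hx : x ≠ 0) (hy : y ≠ 0)
    (h1 : |arg x| < Real.pi/2) (h2 : |arg (x*y)| < Real.pi/2) :
    arg x + arg y ∈ Set.Ioc (-Real.pi) Real.pi := by
  have h0 := Complex.arg_mul_coe_angle hx hy
  rw [← Real.Angle.coe_add, Real.Angle.angle_eq_iff_two_pi_dvd_sub] at h0
  obtain ⟨k, hk⟩ := h0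
  have hπ := Real.pi_pos
  have h3 := Complex.neg_pi_lt_arg y
  have h4 := Complex.arg_le_pi y
  rw [abs_lt] at h1 h2
  have hkb : (-1 : ℝ) < k ∧ (k : ℝ) < 1 := by constructor <;> nlinarith
  have hk0 : k = 0 := by
    have l1 : (-1 : ℤ) < k := by exact_mod_cast hkb.1
    have l2 : (k : ℤ) < 1 := by exact_mod_cast hkb.2
    omega
  rw [hk0] at hk
  push_cast at hk
  constructor <;> nlinarith

private lemma W_re_pos {z τ : ℂ} (hz : 0 < z.im) (hτ : 0 < τ.im) :
    0 < ((starRingEnd ℂ z - τ) / (starRingEnd ℂ z - z)).re := by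
  rw [Complex.div_re]
  simp [Complex.normSq_apply]
  apply div_pos <;> nlinarith

private lemma det_entries (g : Matrix.SpecialLinearGroup (Fin 2) ℝ) :
    (g.1 0 0 : ℂ) * (g.1 1 1 : ℂ) - (g.1 0 1 : ℂ) * (g.1 1 0 : ℂ) = 1 := by
  have h := g.2
  rw [Matrix.det_fin_two] at h
  exact_mod_cast congrArg (fun x : ℝ => (x : ℂ)) h

private lemma mdenom_ne_zero (g : Matrix.SpecialLinearGroup (Fin 2) ℝ) {z : ℂ}
    (hz : z.im ≠ 0) : mdenom g z ≠ 0 := by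
  intro h
  rw [Complex.ext_iff] at h
  simp [mdenom] at h
  obtain ⟨h1, h2⟩ := h
  have hc : (g.1 1 0 : ℝ) = 0 := h2.resolve_right hz
  have hd : (g.1 1 1 : ℝ) = 0 := by rw [hc] at h1; simpa using h1
  have h := g.2
  rw [Matrix.det_fin_two] at h
  rw [hc, hd] at h
  simp at h

private lemma mact_im_pos (g : Matrix.SpecialLinearGroup (Fin 2) ℝ) {z : ℂ}
    (hz : 0 < z.im) : 0 < (mact g z).im := by
  have hp : mdenom g z ≠ 0 := mdenom_ne_zero g hz.ne'
  have hN : 0 < Complex.normSq (mdenom g z) := by rwa [Complex.normSq_pos]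
  have h := g.2
  rw [Matrix.det_fin_two] at h
  rw [mact, Complex.div_im]
  rw [div_sub_div_same]
  apply div_pos _ hN
  simp [mdenom]
  nlinarith [h, hz]

private lemma conj_sub_ne_zero {w t : ℂ} (hw : 0 < w.im) (ht : 0 < t.im) :
    starRingEnd ℂ w - t ≠ 0 := by
  intro h
  have h2 := congrArg Complex.im h
  simp [Complex.sub_im, Complex.conj_im] at h2
  linarith

/-- the kernel `K_r` satisfies the invariance
`(cz+d)^(-r) (cτ+d)^(r-2) K_r(gz; gτ) = K_r(z;τ)` for all `g ∈ SL₂(ℝ)` and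
`z, τ ∈ ℍ`, `z ≠ τ` (principal branches, i.e. `arg ∈ (-π,π]` on ℍ). -/
theorem kernel_invariance (r : ℂ) (g : Matrix.SpecialLinearGroup (Fin 2) ℝ) :
    ∀ z τ : ℂ, 0 < z.im → 0 < τ.im → z ≠ τ →
      (mdenom g z) ^ (-r) * (mdenom g τ) ^ (r - 2) *
          Kker r (mact g z) (mact g τ) = Kker r z τ := by

  intro z τ hz hτ hzτ
  have hdet := det_entries g
  have hp : mdenom g z ≠ 0 := mdenom_ne_zero g hz.ne'
  have hq : mdenom g τ ≠ 0 := mdenom_ne_zero g hτ.ne'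
  have hpc : starRingEnd ℂ (mdenom g z) ≠ 0 := by
    simpa using hp
  have hzt : z - τ ≠ 0 := sub_ne_zero.mpr hzτ
  have hZz : starRingEnd ℂ z - z ≠ 0 := conj_sub_ne_zero hz hz
  have hZτ : starRingEnd ℂ z - τ ≠ 0 := conj_sub_ne_zero hz hτ
  have hzg : 0 < (mact g z).im := mact_im_pos g hz
  have hτg : 0 < (mact g τ).im := mact_im_pos g hτ
  have hconj_p : starRingEnd ℂ (mdenom g z) =
      (g.1 1 0 : ℂ) * starRingEnd ℂ z + (g.1 1 1 : ℂ) := by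
    simp [mdenom, Complex.conj_ofReal]
  have hconj_zg : starRingEnd ℂ (mact g z) =
      ((g.1 0 0 : ℂ) * starRingEnd ℂ z + (g.1 0 1 : ℂ)) / starRingEnd ℂ (mdenom g z) := by
    simp [mact, map_div₀, Complex.conj_ofReal]
  -- key algebraic identities
  have h1 : mact g z - mact g τ = (z - τ) / (mdenom g z * mdenom g τ) := by
    rw [mact, mact, div_sub_div _ _ hp hq]
    congr 1
    rw [mdenom, mdenom]
    linear_combination (z - τ) * hdet
  have h2 : starRingEnd ℂ (mact g z) - mact g τ =
      (starRingEnd ℂ z - τ) / (starRingEnd ℂ (mdenom g z) * mdenom g τ) := by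
    rw [hconj_zg, mact, div_sub_div _ _ hpc hq]
    congr 1
    rw [hconj_p, mdenom]
    linear_combination (starRingEnd ℂ z - τ) * hdet
  have h3 : starRingEnd ℂ (mact g z) - mact g z =
      (starRingEnd ℂ z - z) / (starRingEnd ℂ (mdenom g z) * mdenom g z) := by
    rw [hconj_zg, mact, div_sub_div _ _ hpc hp]
    congr 1
    rw [hconj_p, mdenom]
    linear_combination (starRingEnd ℂ z - z) * hdet
  have hW' : (starRingEnd ℂ (mact g z) - mact g τ) / (starRingEnd ℂ (mact g z) - mact g z) =
      ((starRingEnd ℂ z - τ) / (starRingEnd ℂ z - z)) * (mdenom g z * (mdenom g τ)⁻¹) := by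
    rw [h2, h3]
    field_simp
  set W : ℂ := (starRingEnd ℂ z - τ) / (starRingEnd ℂ z - z) with hWdef
  have hWne : W ≠ 0 := div_ne_zero hZτ hZz
  have hWre : 0 < W.re := W_re_pos hz hτ
  have hu : mdenom g z * (mdenom g τ)⁻¹ ≠ 0 := mul_ne_zero hp (inv_ne_zero hq)
  have hW're : 0 < (W * (mdenom g z * (mdenom g τ)⁻¹)).re := by
    rw [← hW']
    exact W_re_pos hzg hτg
  have habs1 : |arg W| < Real.pi/2 := Complex.abs_arg_lt_pi_div_two_iff.mpr (Or.inl hWre)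
  have habs2 : |arg (W * (mdenom g z * (mdenom g τ)⁻¹))| < Real.pi/2 :=
    Complex.abs_arg_lt_pi_div_two_iff.mpr (Or.inl hW're)
  have step2 : (W * (mdenom g z * (mdenom g τ)⁻¹)) ^ (r-1)
      = W ^ (r-1) * (mdenom g z * (mdenom g τ)⁻¹) ^ (r-1) :=
    cpow_mul_of_arg hWne hu (arg_add_mem hWne hu habs1 habs2) _
  have hsplit : (mdenom g z * (mdenom g τ)⁻¹) ^ (r-1)
      = (mdenom g z) ^ (r-1) * ((mdenom g τ) ^ (r-1))⁻¹ := by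
    by_cases hc : (g.1 1 0 : ℝ) = 0
    · have hpd : mdenom g z = ((g.1 1 1 : ℝ) : ℂ) := by simp [mdenom, hc]
      have hqd : mdenom g τ = ((g.1 1 1 : ℝ) : ℂ) := by simp [mdenom, hc]
      have hd0 : ((g.1 1 1 : ℝ) : ℂ) ≠ 0 := hpd ▸ hp
      rw [hpd, hqd, mul_inv_cancel₀ hd0, one_cpow,
        mul_inv_cancel₀ (by simp [Complex.cpow_eq_zero_iff, hd0])]
    · have hqim : (mdenom g τ).im ≠ 0 := by
        simp [mdenom]
        exact ⟨hc, hτ.ne'⟩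
      have hpim : (mdenom g z).im ≠ 0 := by
        simp [mdenom]
        exact ⟨hc, hz.ne'⟩
      have hargq : arg (mdenom g τ) ≠ Real.pi := by
        intro h
        rw [Complex.arg_eq_pi_iff] at h
        exact hqim h.2
      have hinv : arg (mdenom g τ)⁻¹ = - arg (mdenom g τ) := by
        rw [Complex.arg_inv, if_neg hargq]
      have hpim' : (mdenom g z).im = (g.1 1 0 : ℝ) * z.im := by simp [mdenom]
      have hqim' : (mdenom g τ).im = (g.1 1 0 : ℝ) * τ.im := by simp [mdenom]
      have hmem2 : arg (mdenom g z) + arg (mdenom g τ)⁻¹ ∈ Set.Ioc (-Real.pi) Real.pi := by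
        rw [hinv]
        rcases lt_or_gt_of_ne hc with h | h
        · have a1 : arg (mdenom g z) < 0 := Complex.arg_neg_iff.mpr (by nlinarith [hpim'])
          have a2 : arg (mdenom g τ) < 0 := Complex.arg_neg_iff.mpr (by nlinarith [hqim'])
          have a3 := Complex.neg_pi_lt_arg (mdenom g z)
          have a4 := Complex.neg_pi_lt_arg (mdenom g τ)
          constructor <;> linarith
        · have a1 : 0 ≤ arg (mdenom g z) := Complex.arg_nonneg_iff.mpr (by nlinarith [hpim'])
          have a2 : 0 ≤ arg (mdenom g τ) := Complex.arg_nonneg_iff.mpr (by nlinarith [hqim'])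
          have a3 : arg (mdenom g z) < Real.pi := Complex.arg_lt_pi_iff.mpr (Or.inr hpim)
          have a4 : arg (mdenom g τ) < Real.pi := Complex.arg_lt_pi_iff.mpr (Or.inr hqim)
          constructor <;> linarith
      rw [cpow_mul_of_arg hp (inv_ne_zero hq) hmem2, Complex.inv_cpow _ _ hargq]
  -- final computation
  have e1 : (mdenom g z) ^ (r-1) * mdenom g z = (mdenom g z) ^ r := by
    conv_rhs => rw [show r = (r-1)+1 by ring]
    rw [Complex.cpow_add _ _ hp, Complex.cpow_one]
  have e2 : (mdenom g τ) ^ (r-2) * mdenom g τ = (mdenom g τ) ^ (r-1) := by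
    conv_rhs => rw [show r-1 = (r-2)+1 by ring]
    rw [Complex.cpow_add _ _ hq, Complex.cpow_one]
  have hA : (mdenom g z) ^ (r-1) ≠ 0 := by simp [Complex.cpow_eq_zero_iff, hp]
  have hC : (mdenom g τ) ^ (r-2) ≠ 0 := by simp [Complex.cpow_eq_zero_iff, hq]
  rw [Kker, Kker, h1, hW', step2, hsplit, Complex.cpow_neg, ← e1, ← e2]
  field_simp
  ring
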